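/- arXiv:1501.06997 — 2 statements merged into one kernel-verified Lean document; each statement's English description precedes it below -/
import Mathlib

section
/- Let α be an involutory automorphism of a Hamiltonian cycle system H of order 2n+1. Then α fixes every cycle of H (setwise). -/
open Pointwise

variable {V : Type*}

/-- The action of a permutation on a simple graph by relabelling vertices. -/
instance permGraphAction : MulAction (Equiv.Perm V) (SimpleGraph V) where
  smul σ H := H.map σ.toEmbedding
  one_smul H := by
    show H.map (1 : Equiv.Perm V).toEmbedding = H
    ext a b
    simp [SimpleGraph.map_adj]
  mul_smul σ τ H := by
    ext a b
    show (H.map (σ * τ).toEmbedding).Adj a b ↔ ((H.map τ.toEmbedding).map σ.toEmbedding).Adj a b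
    rw [SimpleGraph.map_map]
    rfl

lemma perm_smul_graph (σ : Equiv.Perm V) (H : SimpleGraph V) :
    σ • H = H.map σ.toEmbedding := rfl

/-- A Hamiltonian cycle of the complete graph on `V`: a connected, 2-regular
(spanning) subgraph. -/
def IsHamCycle [Fintype V] (H : SimpleGraph V) : Prop :=
  H.Connected ∧ ∀ v : V, (H.neighborSet v).ncard = 2

/-- A Hamiltonian cycle system: a set of Hamiltonian cycles whose edge sets
partition the edge set of the complete graph. -/
def IsHCS [Fintype V] (𝓗 : Set (SimpleGraph V)) : Prop :=
  (∀ H ∈ 𝓗, IsHamCycle H) ∧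
    ∀ e ∈ (⊤ : SimpleGraph V).edgeSet, ∃! H, H ∈ 𝓗 ∧ e ∈ H.edgeSet

/-- The full automorphism group of a Hamiltonian cycle system, as the subgroup
of vertex permutations preserving the set of cycles. -/
def autHCS (𝓗 : Set (SimpleGraph V)) : Subgroup (Equiv.Perm V) :=
  MulAction.stabilizer (Equiv.Perm V) 𝓗

/-- The cycle graph traced by a map from `ZMod m` (consecutive residues are adjacent). -/
def cycleOn {W : Type*} (m : ℕ) (f : ZMod m → W) : SimpleGraph W :=
  SimpleGraph.fromRel (fun a b => ∃ i : ZMod m, f i = a ∧ f (i + 1) = b)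


section HCSAux

open SimpleGraph


lemma exists_other_nbr {H : SimpleGraph V}
    (hreg : ∀ x, (H.neighborSet x).ncard = 2) {x y : V} (hxy : H.Adj x y) :
    ∃! w, w ≠ y ∧ H.Adj x w := by
  obtain ⟨a, b, hab, hset⟩ := Set.ncard_eq_two.mp (hreg x)
  have hy : y ∈ ({a, b} : Set V) := hset ▸ hxy
  have ha : H.Adj x a := by
    have : a ∈ H.neighborSet x := by rw [hset]; exact Set.mem_insert _ _
    exact this
  have hb : H.Adj x b := by
    have : b ∈ H.neighborSet x := by rw [hset]; exact Set.mem_insert_of_mem _ rfl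
    exact this
  have hmem : ∀ w, H.Adj x w → w = a ∨ w = b := by
    intro w hw
    have : w ∈ ({a, b} : Set V) := hset ▸ hw
    simpa using this
  rcases (by simpa using hy : y = a ∨ y = b) with rfl | rfl
  · exact ⟨b, ⟨hab.symm, hb⟩, fun w hw => ((hmem w hw.2).resolve_left hw.1)⟩
  · exact ⟨a, ⟨hab, ha⟩, fun w hw => ((hmem w hw.2).resolve_right hw.1)⟩

lemma nbr_pair [Fintype V] {H : SimpleGraph V} (hreg : ∀ x, (H.neighborSet x).ncard = 2)
    {x a b : V} (ha : H.Adj x a) (hb : H.Adj x b) (hab : a ≠ b) :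
    H.neighborSet x = {a, b} := by
  refine (Set.eq_of_subset_of_ncard_le ?_ ?_ (Set.toFinite _)).symm
  · intro w hw
    rcases hw with rfl | rfl
    · exact ha
    · exact hb
  · rw [hreg, Set.ncard_pair hab]

open Classical in
noncomputable def cycStep (H : SimpleGraph V) (p : V × V) : V × V :=
  (p.2, if h : ∃ w, w ≠ p.1 ∧ H.Adj p.2 w then h.choose else p.1)

noncomputable def cycWalk (H : SimpleGraph V) (v0 a : V) (k : ℕ) : V :=
  ((cycStep H)^[k] (v0, a)).1

lemma cycWalk_zero (H : SimpleGraph V) (v0 a : V) : cycWalk H v0 a 0 = v0 := rfl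

lemma cycWalk_snd (H : SimpleGraph V) (v0 a : V) (k : ℕ) :
    ((cycStep H)^[k] (v0, a)).2 = cycWalk H v0 a (k+1) := by
  rw [cycWalk, Function.iterate_succ_apply']
  rfl

lemma cycWalk_one (H : SimpleGraph V) (v0 a : V) : cycWalk H v0 a 1 = a :=
  (cycWalk_snd H v0 a 0).symm

lemma cycStep_spec {H : SimpleGraph V} (hreg : ∀ x, (H.neighborSet x).ncard = 2)
    {p : V × V} (hp : H.Adj p.1 p.2) :
    H.Adj p.2 (cycStep H p).2 ∧ (cycStep H p).2 ≠ p.1 := by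
  have hex : ∃ w, w ≠ p.1 ∧ H.Adj p.2 w :=
    ((exists_other_nbr hreg hp.symm).exists).imp fun w hw => hw
  dsimp only [cycStep]
  rw [dif_pos hex]
  exact ⟨hex.choose_spec.2, hex.choose_spec.1⟩

lemma cycWalk_pair_adj {H : SimpleGraph V} (hreg : ∀ x, (H.neighborSet x).ncard = 2)
    {v0 a : V} (h0 : H.Adj v0 a) (k : ℕ) :
    H.Adj ((cycStep H)^[k] (v0, a)).1 ((cycStep H)^[k] (v0, a)).2 := by
  induction k with
  | zero => exact h0
  | succ k ih =>
    rw [Function.iterate_succ_apply']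
    exact (cycStep_spec hreg ih).1

lemma cycWalk_adj {H : SimpleGraph V} (hreg : ∀ x, (H.neighborSet x).ncard = 2)
    {v0 a : V} (h0 : H.Adj v0 a) (k : ℕ) :
    H.Adj (cycWalk H v0 a k) (cycWalk H v0 a (k+1)) := by
  have := cycWalk_pair_adj hreg h0 k
  rwa [cycWalk_snd] at this

lemma cycWalk_ne2 {H : SimpleGraph V} (hreg : ∀ x, (H.neighborSet x).ncard = 2)
    {v0 a : V} (h0 : H.Adj v0 a) (k : ℕ) :
    cycWalk H v0 a (k+2) ≠ cycWalk H v0 a k := by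
  have h1 := (cycStep_spec hreg (cycWalk_pair_adj hreg h0 k)).2
  have h2 : cycWalk H v0 a (k+2) = (cycStep H ((cycStep H)^[k] (v0,a))).2 := by
    rw [← cycWalk_snd, Function.iterate_succ_apply']
  rw [← h2] at h1
  exact h1

lemma cycle_param [Fintype V] {n : ℕ} (hn : 1 ≤ n) (hV : Fintype.card V = 2*n+1)
    {H : SimpleGraph V} (hconn : H.Connected) (hreg : ∀ x, (H.neighborSet x).ncard = 2) :
    ∃ g : ZMod (2*n+1) → V, Function.Surjective g ∧ Function.Injective g ∧
      ∀ i, H.Adj (g i) (g (i+1)) := by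
  classical
  haveI : Nonempty V := Fintype.card_pos_iff.mp (by omega)
  set v0 : V := Classical.arbitrary V with hv0
  obtain ⟨a, ha⟩ : (H.neighborSet v0).Nonempty :=
    Set.nonempty_of_ncard_ne_zero (by rw [hreg]; omega)
  have ha : H.Adj v0 a := ha
  set f : ℕ → V := cycWalk H v0 a with hf
  have hadj : ∀ k, H.Adj (f k) (f (k+1)) := fun k => cycWalk_adj hreg ha k
  have hne2 : ∀ k, f (k+2) ≠ f k := fun k => cycWalk_ne2 hreg ha k
  -- a collision exists
  have hPex : ∃ k, ∃ j, j < k ∧ f j = f k := by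
    obtain ⟨i, j, hne, hij⟩ := Fintype.exists_ne_map_eq_of_card_lt
      (fun i : Fin (2*n+2) => f i) (by rw [hV]; simp)
    rcases Nat.lt_or_ge i.val j.val with hlt | hge
    · exact ⟨j.val, i.val, hlt, hij⟩
    · have : j.val < i.val := by
        rcases Nat.lt_or_ge j.val i.val with h | h
        · exact h
        · exact absurd (Fin.ext (le_antisymm hge h)) (Ne.symm hne)
      exact ⟨i.val, j.val, this, hij.symm⟩
  set r := Nat.find hPex with hr
  obtain ⟨j, hjr, hje⟩ : ∃ j, j < r ∧ f j = f r := by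
    obtain ⟨j, h1, h2⟩ := Nat.find_spec hPex
    exact ⟨j, h1, h2⟩
  have hmin : ∀ k, k < r → ¬ ∃ j, j < k ∧ f j = f k := by
    intro k hk hc
    obtain ⟨j', h1, h2⟩ := hc
    exact Nat.find_min hPex hk ⟨j', h1, h2⟩
  clear_value r
  have hinjlt : ∀ ⦃i j : ℕ⦄, i < r → j < r → f i = f j → i = j := by
    intro i j hi hj he
    rcases Nat.lt_trichotomy i j with h | h | h
    · exact absurd ⟨i, h, he⟩ (hmin j hj)
    · exact h
    · exact absurd ⟨j, h, he.symm⟩ (hmin i hi)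
  have hr3 : 3 ≤ r := by
    by_contra hlt
    push_neg at hlt
    interval_cases r
    · omega
    · have hj0 : j = 0 := by omega
      subst hj0
      exact (hadj 0).ne hje
    · interval_cases j
      · exact hne2 0 hje.symm
      · exact (hadj 1).ne hje
  have hnbrk : ∀ k, H.neighborSet (f (k+1)) = {f k, f (k+2)} := fun k =>
    nbr_pair hreg (hadj k).symm (hadj (k+1)) (hne2 k).symm
  -- first return is to the start
  have hj0 : j = 0 := by
    by_contra hj
    obtain ⟨j', rfl⟩ : ∃ j', j = j'+1 := ⟨j-1, by omega⟩
    obtain ⟨r', hr'⟩ : ∃ r', r = r'+1 := ⟨r-1, by omega⟩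
    subst hr'
    have h1 : f r' ∈ H.neighborSet (f (j'+1)) := by
      have : H.Adj (f r') (f (j'+1)) := by rw [hje]; exact hadj r'
      exact this.symm
    rw [hnbrk j'] at h1
    rcases h1 with h1 | h1
    · have : r' = j' := hinjlt (by omega) (by omega) h1
      omega
    · simp only [Set.mem_singleton_iff] at h1
      rcases Nat.lt_or_ge (j'+2) (r'+1) with hlt2 | hge2
      · have : r' = j'+2 := hinjlt (by omega) (by omega) h1
        have h32 : j' + 1 + 2 = r' + 1 := by omega
        exact hne2 (j'+1) (by rw [h32]; exact hje.symm)
      · have hjr2 : j' + 2 = r' + 1 := by omega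
        rw [hjr2] at h1
        exact (hadj r').ne h1
  subst hj0
  -- hje : f 0 = f r
  set S : Set V := f '' (Set.Iio r) with hS
  have hS1 : f 1 ∈ S := ⟨1, Set.mem_Iio.mpr (by omega), rfl⟩
  have hcl : ∀ x ∈ S, ∀ y, H.Adj x y → y ∈ S := by
    rintro x ⟨k, hk, rfl⟩ y hy
    simp only [Set.mem_Iio] at hk
    obtain _ | k' := k
    ·
      obtain ⟨r', hr'⟩ : ∃ r', r = r'+1 := ⟨r-1, by omega⟩
      have hadjr : H.Adj (f 0) (f r') := by
        rw [hje, hr']; exact (hadj r').symm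
      have h1r : f 1 ≠ f r' := by
        intro hc
        have : (1:ℕ) = r' := hinjlt (by omega) (by omega) hc
        omega
      have : H.neighborSet (f 0) = {f 1, f r'} := nbr_pair hreg (hadj 0) hadjr h1r
      have hy' : y ∈ H.neighborSet (f 0) := hy
      rw [this] at hy'
      rcases hy' with rfl | hy'
      · exact ⟨1, Set.mem_Iio.mpr (by omega), rfl⟩
      · simp only [Set.mem_singleton_iff] at hy'
        exact ⟨r', Set.mem_Iio.mpr (by omega), hy'.symm⟩
    · have hy' : y ∈ H.neighborSet (f (k'+1)) := hy
      rw [hnbrk k'] at hy'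
      rcases hy' with rfl | hy'
      · exact ⟨k', Set.mem_Iio.mpr (by omega), rfl⟩
      · simp only [Set.mem_singleton_iff] at hy'
        rcases Nat.lt_or_ge (k'+2) r with h | h
        · exact ⟨k'+2, Set.mem_Iio.mpr h, hy'.symm⟩
        · have : k' + 2 = r := by omega
          refine ⟨0, Set.mem_Iio.mpr (by omega), ?_⟩
          rw [hje, ← this, hy']
  have hall : ∀ x, x ∈ S := by
    have key : ∀ (u y : V), (p : H.Walk u y) → u ∈ S → y ∈ S := by
      intro u y p
      induction p with
      | nil => exact id
      | cons h p ih => intro hu; exact ih (hcl _ hu _ h)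
    intro x
    obtain ⟨p⟩ := hconn (f 0) x
    exact key _ _ p ⟨0, Set.mem_Iio.mpr (by omega), rfl⟩
  -- r = 2n+1
  have hbij : Function.Bijective (fun i : Fin r => f i) := by
    constructor
    · intro i j hij
      exact Fin.ext (hinjlt i.isLt j.isLt hij)
    · intro x
      obtain ⟨k, hk, rfl⟩ := hall x
      exact ⟨⟨k, hk⟩, rfl⟩
  have hrm : r = 2*n+1 := by
    have := Fintype.card_of_bijective hbij
    rw [hV, Fintype.card_fin] at this
    exact this
  haveI : NeZero (2*n+1) := ⟨by omega⟩
  refine ⟨fun i => f i.val, ?_, ?_, ?_⟩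
  · intro x
    obtain ⟨k, hk, rfl⟩ := hall x
    refine ⟨(k : ZMod (2*n+1)), ?_⟩
    show f (((k:ℕ) : ZMod (2*n+1)).val) = f k
    have hk' : k < r := Set.mem_Iio.mp hk
    rw [ZMod.val_natCast, Nat.mod_eq_of_lt (by omega)]
  · intro i j hij
    have : i.val = j.val := hinjlt (by rw [hrm]; exact i.val_lt) (by rw [hrm]; exact j.val_lt) hij
    have h1 : ((i.val : ℕ) : ZMod (2*n+1)) = ((j.val : ℕ) : ZMod (2*n+1)) := by rw [this]
    rwa [ZMod.natCast_val, ZMod.natCast_val, ZMod.cast_id, ZMod.cast_id] at h1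
  · intro i
    have hval : (i+1).val = (i.val + 1) % (2*n+1) := by
      have : i + 1 = ((i.val + 1 : ℕ) : ZMod (2*n+1)) := by
        push_cast
        rw [ZMod.natCast_val, ZMod.cast_id]
      rw [this, ZMod.val_natCast]
    show H.Adj (f i.val) (f ((i+1).val))
    rcases Nat.lt_or_ge (i.val + 1) (2*n+1) with h | h
    · rw [hval, Nat.mod_eq_of_lt h]
      exact hadj i.val
    · have hiv : i.val + 1 = 2*n+1 := by have := i.val_lt; omega
      have hf0 : f 0 = f (i.val + 1) := by rw [hje]; congr 1; omega
      rw [hval, hiv, Nat.mod_self, hf0]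
      exact hadj i.val

lemma reflection_structure [Fintype V] {n : ℕ} (hn : 1 ≤ n) (hV : Fintype.card V = 2*n+1)
    {H : SimpleGraph V} (hconn : H.Connected) (hreg : ∀ x, (H.neighborSet x).ncard = 2)
    {σ : Equiv.Perm V} (hσAdj : ∀ x y, H.Adj x y → H.Adj (σ x) (σ y))
    (hinv : ∀ x, σ (σ x) = x) (hσne : σ ≠ 1) :
    (∃ v, σ v = v ∧ ∀ w, σ w = w → w = v) ∧
      ∀ e ∈ H.edgeSet, ∀ e' ∈ H.edgeSet,
        Sym2.map σ e = e → Sym2.map σ e' = e' → e = e' := by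
  obtain ⟨g, hgs, hgi, hgadj⟩ := cycle_param hn hV hconn hreg
  haveI : NeZero (2*n+1) := ⟨by omega⟩
  have h2ne : (2 : ZMod (2*n+1)) ≠ 0 := by
    intro hc
    have h2 : ((2:ℕ) : ZMod (2*n+1)) = 0 := by exact_mod_cast hc
    have := (ZMod.natCast_eq_zero_iff 2 (2*n+1)).mp h2
    have := Nat.le_of_dvd (by omega) this
    omega
  have hone : ((n : ZMod (2*n+1)) + 1) * 2 = 1 := by
    have h1 : (((2*n+1) : ℕ) : ZMod (2*n+1)) = 0 := ZMod.natCast_self _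
    have h2 : ((n : ZMod (2*n+1)) + 1) * 2 = (((2*n+1) : ℕ) : ZMod (2*n+1)) + 1 := by
      push_cast
      ring
    rw [h2, h1, zero_add]
  have hcancel : ∀ a b : ZMod (2*n+1), 2*a = 2*b → a = b := by
    intro a b hab
    calc a = (((n : ZMod (2*n+1))+1)*2)*a := by rw [hone, one_mul]
      _ = ((n : ZMod (2*n+1))+1)*(2*a) := by ring
      _ = ((n : ZMod (2*n+1))+1)*(2*b) := by rw [hab]
      _ = (((n : ZMod (2*n+1))+1)*2)*b := by ring
      _ = b := by rw [hone, one_mul]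
  have hgadj' : ∀ i : ZMod (2*n+1), H.Adj (g i) (g (i-1)) := by
    intro i
    have := (hgadj (i-1)).symm
    rwa [sub_add_cancel] at this
  have hgne : ∀ i : ZMod (2*n+1), g (i-1) ≠ g (i+1) := by
    intro i hc
    have h' : i - 1 = i + 1 := hgi hc
    apply h2ne
    linear_combination -h'
  have hgnbr : ∀ i, H.neighborSet (g i) = {g (i-1), g (i+1)} := fun i =>
    nbr_pair hreg (hgadj' i) (hgadj i) (hgne i)
  have hedge : ∀ e ∈ H.edgeSet, ∃ i, e = s(g i, g (i+1)) := by
    intro e he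
    induction e with
    | _ x y =>
      rw [SimpleGraph.mem_edgeSet] at he
      obtain ⟨i, rfl⟩ := hgs x
      have hy : y ∈ H.neighborSet (g i) := he
      rw [hgnbr i] at hy
      rcases hy with rfl | hy
      · refine ⟨i-1, ?_⟩
        rw [sub_add_cancel]
        exact Sym2.eq_swap
      · simp only [Set.mem_singleton_iff] at hy
        subst hy
        exact ⟨i, rfl⟩
  obtain ⟨c0, hc0⟩ := hgs (σ (g 0))
  have hσg1 : σ (g 1) ∈ H.neighborSet (g c0) := by
    have : H.Adj (σ (g 0)) (σ (g 1)) := hσAdj _ _ (by simpa using hgadj 0)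
    rw [← hc0] at this
    exact this
  rw [hgnbr c0] at hσg1
  have main : ∀ ε : ZMod (2*n+1), (ε = 1 ∨ ε = -1) → σ (g 1) = g (c0 + ε) →
      ∀ t, σ (g t) = g (c0 + ε * t) := by
    intro ε hε h1
    have hε2 : ε * ε = 1 := by rcases hε with rfl | rfl <;> ring
    have hnat : ∀ k : ℕ, σ (g (k : ZMod (2*n+1))) = g (c0 + ε * (k : ZMod (2*n+1))) ∧
        σ (g ((k+1 : ℕ) : ZMod (2*n+1))) = g (c0 + ε * ((k+1 : ℕ) : ZMod (2*n+1))) := by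
      intro k
      induction k with
      | zero =>
        constructor
        · simpa using hc0.symm
        · simpa using h1
      | succ k ih =>
        refine ⟨ih.2, ?_⟩
        have hmem : σ (g ((k+2 : ℕ) : ZMod (2*n+1))) ∈
            H.neighborSet (g (c0 + ε * ((k+1 : ℕ) : ZMod (2*n+1)))) := by
          rw [← ih.2]
          refine hσAdj _ _ ?_
          have : ((k+2 : ℕ) : ZMod (2*n+1)) = ((k+1 : ℕ) : ZMod (2*n+1)) + 1 := by push_cast; ring
          rw [this]
          exact hgadj _
        rw [hgnbr] at hmem
        have hne : σ (g ((k+2 : ℕ) : ZMod (2*n+1))) ≠ g (c0 + ε * (k : ZMod (2*n+1))) := by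
          rw [← ih.1]
          intro hc
          have h' := hgi (σ.injective hc)
          apply h2ne
          have : ((k+2 : ℕ) : ZMod (2*n+1)) = (k : ZMod (2*n+1)) + 2 := by push_cast; ring
          rw [this] at h'
          linear_combination h'
        have hcand : c0 + ε * ((k+1:ℕ) : ZMod (2*n+1)) - 1 = c0 + ε * (k : ZMod (2*n+1)) ∨
            c0 + ε * ((k+1:ℕ) : ZMod (2*n+1)) - 1 = c0 + ε * ((k+2:ℕ) : ZMod (2*n+1)) := by
          rcases hε with rfl | rfl
          · left; push_cast; ring
          · right; push_cast; ring
        have hcand' : c0 + ε * ((k+1:ℕ) : ZMod (2*n+1)) + 1 = c0 + ε * (k : ZMod (2*n+1)) ∨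
            c0 + ε * ((k+1:ℕ) : ZMod (2*n+1)) + 1 = c0 + ε * ((k+2:ℕ) : ZMod (2*n+1)) := by
          rcases hε with rfl | rfl
          · right; push_cast; ring
          · left; push_cast; ring
        rcases hmem with hm | hm
        · rcases hcand with hc | hc
          · rw [hc] at hm; exact absurd hm hne
          · rw [hc] at hm; exact hm
        · simp only [Set.mem_singleton_iff] at hm
          rcases hcand' with hc | hc
          · rw [hc] at hm; exact absurd hm hne
          · rw [hc] at hm; exact hm
    intro t
    have := (hnat t.val).1
    rwa [ZMod.natCast_val, ZMod.cast_id] at this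
  have hkey : ∃ ε : ZMod (2*n+1), (ε = 1 ∨ ε = -1) ∧ ∀ t, σ (g t) = g (c0 + ε * t) := by
    rcases hσg1 with hm | hm
    · refine ⟨-1, Or.inr rfl, main (-1) (Or.inr rfl) ?_⟩
      rw [hm]; congr 1; ring
    · simp only [Set.mem_singleton_iff] at hm
      refine ⟨1, Or.inl rfl, main 1 (Or.inl rfl) ?_⟩
      rw [hm]
  obtain ⟨ε, hε, hεeq⟩ := hkey
  have hεneg : ε = -1 := by
    rcases hε with rfl | rfl
    · exfalso
      have hc00 : c0 = 0 := by
        have h1 : σ (σ (g 0)) = g 0 := hinv _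
        rw [hεeq 0] at h1
        rw [hεeq (c0 + 1 * 0)] at h1
        have := hgi h1
        apply hcancel c0 0
        rw [mul_zero]
        linear_combination this
      apply hσne
      ext x
      obtain ⟨t, rfl⟩ := hgs x
      rw [hεeq t, hc00]
      simp
    · rfl
  subst hεneg
  have hσgt : ∀ t, σ (g t) = g (c0 - t) := by
    intro t
    rw [hεeq t]
    congr 1
    ring
  constructor
  · refine ⟨g (((n : ZMod (2*n+1))+1) * c0), ?_, ?_⟩
    · rw [hσgt]
      congr 1
      linear_combination (-c0) * hone
    · intro w hw
      obtain ⟨t, rfl⟩ := hgs w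
      rw [hσgt] at hw
      have h' := hgi hw
      congr 1
      have h2t : 2*t = c0 := by linear_combination -h'
      apply hcancel
      rw [h2t]
      linear_combination -c0 * hone
  · intro e he e' he' hfe hfe'
    obtain ⟨t, rfl⟩ := hedge e he
    obtain ⟨t', rfl⟩ := hedge e' he'
    rw [Sym2.map_pair_eq, hσgt, hσgt] at hfe hfe'
    have key : ∀ s : ZMod (2*n+1), s(g (c0 - s), g (c0 - (s+1))) = s(g s, g (s+1)) →
        2*s = c0 - 1 := by
      intro s hs
      rw [Sym2.eq_iff] at hs
      rcases hs with ⟨h1, h2⟩ | ⟨h1, h2⟩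
      · have e1 := hgi h1
        have e2 := hgi h2
        exfalso
        apply h2ne
        linear_combination e1 - e2
      · have e1 := hgi h1
        linear_combination -e1
    have k1 := key t hfe
    have k2 := key t' hfe'
    have : t = t' := hcancel _ _ (by rw [k1, k2])
    rw [this]

end HCSAux

/-- an involutory automorphism of an HCS of order `2n+1` fixes every cycle
setwise. -/
theorem involution_fixes_cycles [Fintype V] (n : ℕ) (hV : Fintype.card V = 2 * n + 1)
    (𝓗 : Set (SimpleGraph V)) (h : IsHCS 𝓗) (σ : Equiv.Perm V)
    (hmem : σ ∈ autHCS 𝓗) (hord : orderOf σ = 2) :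
    ∀ H ∈ 𝓗, σ • H = H := by
  classical
  obtain ⟨hham, huniq⟩ := h
  have hσne : σ ≠ 1 := by intro hc; rw [hc, orderOf_one] at hord; omega
  have hσ2 : σ * σ = 1 := by
    have := pow_orderOf_eq_one σ
    rwa [hord, pow_two] at this
  have hinv : ∀ x, σ (σ x) = x := by
    intro x
    have h1 := DFunLike.congr_fun hσ2 x
    simpa [Equiv.Perm.mul_apply] using h1
  have hn : 1 ≤ n := by
    by_contra hc
    have hn0 : n = 0 := by omega
    subst hn0
    haveI := Fintype.card_le_one_iff_subsingleton.mp (le_of_eq (by omega : Fintype.card V = 1))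
    exact hσne (Equiv.ext fun x => Subsingleton.elim _ _)
  have hstab : ∀ K, K ∈ 𝓗 → σ • K ∈ 𝓗 := by
    intro K hK
    have hs : σ • 𝓗 = 𝓗 := hmem
    rw [← hs]
    exact Set.smul_mem_smul_set hK
  have hmapAdj : ∀ (K : SimpleGraph V) (x y : V), K.Adj x y → (σ • K).Adj (σ x) (σ y) := by
    intro K x y hxy
    rw [perm_smul_graph]
    exact ⟨σ.injective.ne hxy.ne, x, y, hxy, rfl, rfl⟩
  have hAdjfix : ∀ (K : SimpleGraph V), σ • K = K → ∀ x y, K.Adj x y → K.Adj (σ x) (σ y) := by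
    intro K hK x y hxy
    rw [← hK]; exact hmapAdj K x y hxy
  have hedgemem : ∀ (K : SimpleGraph V), ∀ e ∈ K.edgeSet, Sym2.map σ e ∈ (σ • K).edgeSet := by
    intro K e
    refine Sym2.ind (fun x y he => ?_) e
    rw [perm_smul_graph]
    have hadj : K.Adj x y := (K.mem_edgeSet).mp he
    rw [Sym2.map_pair_eq]
    exact ((K.map σ.toEmbedding).mem_edgeSet).mpr ⟨σ.injective.ne hadj.ne, x, y, hadj, rfl, rfl⟩
  have hpair : ∀ u : V, Sym2.map σ s(u, σ u) = s(u, σ u) := by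
    intro u
    rw [Sym2.map_pair_eq, hinv]
    exact Sym2.eq_swap
  have hfixcyc : ∀ u : V, σ u ≠ u → ∃ K, (K ∈ 𝓗 ∧ s(u, σ u) ∈ K.edgeSet) ∧ σ • K = K ∧
      ∀ K', K' ∈ 𝓗 → s(u, σ u) ∈ K'.edgeSet → K' = K := by
    intro u hu
    have he : s(u, σ u) ∈ (⊤ : SimpleGraph V).edgeSet := by
      rw [SimpleGraph.mem_edgeSet, SimpleGraph.top_adj]
      exact Ne.symm hu
    obtain ⟨K, ⟨hK1, hK2⟩, hKu⟩ := huniq _ he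
    have hfix : σ • K = K := by
      apply hKu
      refine ⟨hstab K hK1, ?_⟩
      have := hedgemem K _ hK2
      rwa [hpair u] at this
    exact ⟨K, ⟨hK1, hK2⟩, hfix, fun K' h1 h2 => hKu K' ⟨h1, h2⟩⟩
  have hrefl : ∀ K, K ∈ 𝓗 → σ • K = K →
      (∃ v, σ v = v ∧ ∀ w, σ w = w → w = v) ∧
      (∀ e ∈ K.edgeSet, ∀ e' ∈ K.edgeSet,
        Sym2.map σ e = e → Sym2.map σ e' = e' → e = e') := fun K hK hf =>
    reflection_structure hn hV (hham K hK).1 (hham K hK).2 (hAdjfix K hf) hinv hσne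
  obtain ⟨u0, hu0⟩ : ∃ u, σ u ≠ u := by
    by_contra hc; push_neg at hc
    exact hσne (Equiv.ext fun x => hc x)
  obtain ⟨H0, ⟨hH0m, _⟩, hH0fix, _⟩ := hfixcyc u0 hu0
  obtain ⟨⟨v, hv, hvuniq⟩, -⟩ := hrefl H0 hH0m hH0fix
  have hnf : ∀ u : V, u ≠ v → σ u ≠ u := fun u hu hc => hu (hvuniq u hc)
  -- the cycle through the edge {v, u}
  have hCex : ∀ u : V, u ≠ v → ∃ K, (K ∈ 𝓗 ∧ K.Adj v u) ∧
      ∀ K', K' ∈ 𝓗 → K'.Adj v u → K' = K := by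
    intro u hu
    have he : s(v,u) ∈ (⊤ : SimpleGraph V).edgeSet := by
      rw [SimpleGraph.mem_edgeSet, SimpleGraph.top_adj]
      exact Ne.symm hu
    obtain ⟨K, ⟨h1, h2⟩, h3⟩ := huniq _ he
    exact ⟨K, ⟨h1, K.mem_edgeSet.mp h2⟩,
      fun K' h1' h2' => h3 K' ⟨h1', K'.mem_edgeSet.mpr h2'⟩⟩
  choose C hCp hCuniq using hCex
  have hCmem : ∀ u hu, C u hu ∈ 𝓗 := fun u hu => (hCp u hu).1
  have hCadj : ∀ u hu, (C u hu).Adj v u := fun u hu => (hCp u hu).2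
  have hCcongr : ∀ (u : V) (hu : u ≠ v) (w : V) (hw : w ≠ v), u = w → C u hu = C w hw := by
    intro u hu w hw he; subst he; rfl
  -- the other neighbour of v on the cycle C u
  have hMex : ∀ (u : V) (hu : u ≠ v), ∃ w, (w ≠ u ∧ (C u hu).Adj v w) ∧
      ∀ w', w' ≠ u → (C u hu).Adj v w' → w' = w := by
    intro u hu
    obtain ⟨w, hw, hwu⟩ := exists_other_nbr (hham _ (hCmem u hu)).2 (hCadj u hu)
    exact ⟨w, hw, fun w' h1 h2 => hwu w' ⟨h1, h2⟩⟩
  choose M hMp hMuniq using hMex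
  have hMne : ∀ u hu, M u hu ≠ u := fun u hu => (hMp u hu).1
  have hMadj : ∀ u hu, (C u hu).Adj v (M u hu) := fun u hu => (hMp u hu).2
  have hMnev : ∀ u hu, M u hu ≠ v := fun u hu => (hMadj u hu).ne'
  have hMcongr : ∀ (u : V) (hu : u ≠ v) (w : V) (hw : w ≠ v), u = w → M u hu = M w hw := by
    intro u hu w hw he; subst he; rfl
  have hCM : ∀ u hu, C (M u hu) (hMnev u hu) = C u hu := fun u hu =>
    (hCuniq (M u hu) (hMnev u hu) (C u hu) (hCmem u hu) (hMadj u hu)).symm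
  have hMM : ∀ u hu, M (M u hu) (hMnev u hu) = u := by
    intro u hu
    have h1 : (C (M u hu) (hMnev u hu)).Adj v u := by
      rw [hCM u hu]; exact hCadj u hu
    exact (hMuniq (M u hu) (hMnev u hu) u (Ne.symm (hMne u hu)) h1).symm
  have hσnev : ∀ u : V, u ≠ v → σ u ≠ v := by
    intro u hu hc
    apply hu
    have h1 := congrArg σ hc
    rwa [hinv, hv] at h1
  have hCσ : ∀ u (hu : u ≠ v), σ • C u hu = C (σ u) (hσnev u hu) := by
    intro u hu
    apply hCuniq
    · exact hstab _ (hCmem u hu)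
    · have h1 := hmapAdj _ _ _ (hCadj u hu)
      rwa [hv] at h1
  -- a chosen neighbour of v in each cycle
  have hrex : ∀ K : SimpleGraph V, K ∈ 𝓗 → ∃ w, w ≠ v ∧ K.Adj v w := by
    intro K hK
    obtain ⟨w, hw⟩ : (K.neighborSet v).Nonempty :=
      Set.nonempty_of_ncard_ne_zero (by rw [(hham K hK).2]; omega)
    exact ⟨w, (hw : K.Adj v w).ne', hw⟩
  choose r hrv hradj using hrex
  have hrcongr : ∀ (K K' : SimpleGraph V) (hK : K ∈ 𝓗) (hK' : K' ∈ 𝓗), K = K' →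
      r K hK = r K' hK' := by
    intro K K' hK hK' he; subst he; rfl
  -- the fixed cycle through {u, σ u}
  have hDex : ∀ (u : V) (hu : u ≠ v), ∃ K, ((K ∈ 𝓗 ∧ s(u, σ u) ∈ K.edgeSet) ∧ σ • K = K) ∧
      ∀ K', K' ∈ 𝓗 → s(u, σ u) ∈ K'.edgeSet → K' = K := by
    intro u hu
    obtain ⟨K, h1, h2, h3⟩ := hfixcyc u (hnf u hu)
    exact ⟨K, ⟨h1, h2⟩, h3⟩
  choose D hDp hDuniq using hDex
  have hDmem : ∀ u hu, D u hu ∈ 𝓗 := fun u hu => (hDp u hu).1.1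
  have hDes : ∀ u hu, s(u, σ u) ∈ (D u hu).edgeSet := fun u hu => (hDp u hu).1.2
  have hDfix : ∀ u hu, σ • D u hu = D u hu := fun u hu => (hDp u hu).2
  have hD_pair : ∀ (u : V) (hu : u ≠ v) (w : V) (hw : w ≠ v), D w hw = D u hu →
      w = u ∨ w = σ u := by
    intro u hu w hw hDD
    have h2 := (hrefl (D u hu) (hDmem u hu) (hDfix u hu)).2
    have hw1 : s(w, σ w) ∈ (D u hu).edgeSet := by rw [← hDD]; exact hDes w hw
    have h3 := h2 _ (hDes u hu) _ hw1 (hpair u) (hpair w)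
    rw [Sym2.eq_iff] at h3
    rcases h3 with ⟨h1, -⟩ | ⟨-, h1⟩
    · exact Or.inl h1.symm
    · exact Or.inr h1.symm
  have hDw : ∀ (u : V) (hu : u ≠ v), D u hu = C (r (D u hu) (hDmem u hu)) (hrv _ _) :=
    fun u hu => hCuniq _ _ _ (hDmem u hu) (hradj _ _)
  have hσr : ∀ (u : V) (hu : u ≠ v),
      σ (r (D u hu) (hDmem u hu)) = M (r (D u hu) (hDmem u hu)) (hrv _ _) := by
    intro u hu
    have hwnev : r (D u hu) (hDmem u hu) ≠ v := hrv _ _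
    have h1 : σ • C (r (D u hu) (hDmem u hu)) hwnev = C (r (D u hu) (hDmem u hu)) hwnev := by
      rw [← hDw u hu]
      exact hDfix u hu
    have h2 : C (σ (r (D u hu) (hDmem u hu))) (hσnev _ hwnev)
        = C (r (D u hu) (hDmem u hu)) hwnev := by
      rw [← hCσ _ hwnev]
      exact h1
    have h3 : (C (r (D u hu) (hDmem u hu)) hwnev).Adj v (σ (r (D u hu) (hDmem u hu))) := by
      rw [← h2]
      exact hCadj _ _
    have h4 : σ (r (D u hu) (hDmem u hu)) ≠ r (D u hu) (hDmem u hu) := hnf _ hwnev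
    exact hMuniq _ hwnev _ h4 h3
  -- counting: every u ≠ v satisfies σ u = M u
  set e : V ≃ Fin (Fintype.card V) := Fintype.equivFin V with he_def
  set Φ : V → V := fun u =>
    if hu : u ≠ v then
      (if (e u : ℕ) ≤ (e (σ u) : ℕ) then r (D u hu) (hDmem u hu)
       else M (r (D u hu) (hDmem u hu)) (hrv _ _))
    else v with hΦdef
  set W : Finset V := Finset.univ.filter (fun u => u ≠ v) with hW
  set Sf : Finset V := Finset.univ.filter (fun u => ∃ hu : u ≠ v, σ u = M u hu) with hSf
  have hΦSf : ∀ (u : V) (hu : u ≠ v), Φ u ∈ Sf := by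
    intro u hu
    have hwnev : r (D u hu) (hDmem u hu) ≠ v := hrv _ _
    have hb : M (r (D u hu) (hDmem u hu)) (hrv _ _) ∈ Sf := by
      rw [hSf, Finset.mem_filter]
      refine ⟨Finset.mem_univ _, hMnev _ _, ?_⟩
      have h1 : σ (M (r (D u hu) (hDmem u hu)) (hrv _ _)) = r (D u hu) (hDmem u hu) := by
        rw [← hσr u hu, hinv]
      rw [h1, hMM]
    have ha : r (D u hu) (hDmem u hu) ∈ Sf := by
      rw [hSf, Finset.mem_filter]
      exact ⟨Finset.mem_univ _, hwnev, hσr u hu⟩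
    rw [hΦdef]
    simp only [dif_pos hu]
    split
    · exact ha
    · exact hb
  have hCΦ : ∀ (u : V) (hu : u ≠ v) (hΦu : Φ u ≠ v), C (Φ u) hΦu = D u hu := by
    intro u hu hΦu
    have : Φ u = (if (e u : ℕ) ≤ (e (σ u) : ℕ) then r (D u hu) (hDmem u hu)
       else M (r (D u hu) (hDmem u hu)) (hrv _ _)) := by
      rw [hΦdef]; simp only [dif_pos hu]
    rcases le_or_gt (e u : ℕ) (e (σ u) : ℕ) with hle | hlt
    · rw [if_pos hle] at this
      rw [hCcongr _ hΦu _ (hrv _ _) this, ← hDw]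
    · rw [if_neg (not_le.mpr hlt)] at this
      rw [hCcongr _ hΦu _ (hMnev _ _) this, hCM, ← hDw]
  have hΦinj : Set.InjOn Φ (W : Set V) := by
    intro u huW w hwW heq
    have hu : u ≠ v := by
      have := huW
      rw [hW] at this
      simpa using this
    have hw : w ≠ v := by
      have := hwW
      rw [hW] at this
      simpa using this
    by_contra hne
    have hΦunv : Φ u ≠ v := by
      have := hΦSf u hu
      rw [hSf, Finset.mem_filter] at this
      exact this.2.1
    have hΦwnv : Φ w ≠ v := by
      have := hΦSf w hw
      rw [hSf, Finset.mem_filter] at this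
      exact this.2.1
    have hDuw : D w hw = D u hu := by
      rw [← hCΦ u hu hΦunv, ← hCΦ w hw hΦwnv]
      exact (hCcongr _ hΦunv _ hΦwnv heq).symm
    have hwσu : w = σ u := (hD_pair u hu w hw hDuw).resolve_left (fun hh => hne hh.symm)
    have hσwu : σ w = u := by rw [hwσu, hinv]
    have hrr : r (D u hu) (hDmem u hu) = r (D w hw) (hDmem w hw) :=
      hrcongr _ _ _ _ hDuw.symm
    have heuw : (e u : ℕ) ≠ (e w : ℕ) := by
      intro hc
      exact hne (e.injective (Fin.ext hc))
    have hΦu' : Φ u = (if (e u : ℕ) ≤ (e w : ℕ) then r (D u hu) (hDmem u hu)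
        else M (r (D u hu) (hDmem u hu)) (hrv _ _)) := by
      rw [hΦdef]; simp only [dif_pos hu, hwσu]
    have hΦw' : Φ w = (if (e w : ℕ) ≤ (e u : ℕ) then r (D w hw) (hDmem w hw)
        else M (r (D w hw) (hDmem w hw)) (hrv _ _)) := by
      rw [hΦdef]; simp only [dif_pos hw, hσwu]
    rcases le_or_gt (e u : ℕ) (e w : ℕ) with hle | hlt
    · have hlt' : ¬ ((e w : ℕ) ≤ (e u : ℕ)) := by omega
      rw [if_pos hle] at hΦu'
      rw [if_neg hlt'] at hΦw'
      apply hMne (r (D u hu) (hDmem u hu)) (hrv _ _)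
      calc M (r (D u hu) (hDmem u hu)) (hrv _ _)
          = M (r (D w hw) (hDmem w hw)) (hrv _ _) := hMcongr _ _ _ _ hrr
        _ = Φ w := hΦw'.symm
        _ = Φ u := heq.symm
        _ = r (D u hu) (hDmem u hu) := hΦu'
    · have hle' : (e w : ℕ) ≤ (e u : ℕ) := le_of_lt hlt
      rw [if_neg (not_le.mpr hlt)] at hΦu'
      rw [if_pos hle'] at hΦw'
      apply hMne (r (D w hw) (hDmem w hw)) (hrv _ _)
      calc M (r (D w hw) (hDmem w hw)) (hrv _ _)
          = M (r (D u hu) (hDmem u hu)) (hrv _ _) := hMcongr _ _ _ _ hrr.symm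
        _ = Φ u := hΦu'.symm
        _ = Φ w := heq
        _ = r (D w hw) (hDmem w hw) := hΦw'
  have hcard : W.card ≤ Sf.card := by
    apply Finset.card_le_card_of_injOn Φ _ hΦinj
    intro u huW
    have hu : u ≠ v := by rw [hW] at huW; simpa using huW
    exact hΦSf u hu
  have hsub : Sf ⊆ W := by
    intro u hu
    rw [hSf, Finset.mem_filter] at hu
    rw [hW, Finset.mem_filter]
    exact ⟨Finset.mem_univ _, hu.2.1⟩
  have hWS : Sf = W := Finset.eq_of_subset_of_card_le hsub hcard
  have hall : ∀ (u : V) (hu : u ≠ v), σ u = M u hu := by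
    intro u hu
    have h1 : u ∈ W := by rw [hW, Finset.mem_filter]; exact ⟨Finset.mem_univ _, hu⟩
    rw [← hWS, hSf, Finset.mem_filter] at h1
    exact h1.2.2
  -- conclusion
  intro H hH
  have hHC : H = C (r H hH) (hrv H hH) := hCuniq _ _ H hH (hradj H hH)
  rw [hHC, hCσ _ (hrv H hH),
    hCcongr _ (hσnev _ (hrv H hH)) _ (hMnev _ (hrv H hH)) (hall _ (hrv H hH)), hCM]
end

section
/- If a group has two distinct involutions that both fix every Hamiltonian cycle of an HCS of order 2n+1 setwise, with fixed points a and b respectively, then the subgroup generated by the two involutions acts on the cycle containing the edge {a,b} as the full dihedral group of order 2(2n+1). -/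
open Pointwise

variable {V : Type*}

section Other
variable (C : SimpleGraph V)

/-- The neighbour of `v` other than `u` (in a 2-regular graph). -/
noncomputable def otherNbr (u v : V) : V :=
  letI := Classical.dec
  if h : ∃ w, C.Adj v w ∧ w ≠ u then h.choose else u

variable {C}

lemma otherNbr_spec (hdeg : (C.neighborSet v).ncard = 2) (h : C.Adj v u) :
    C.Adj v (otherNbr C u v) ∧ otherNbr C u v ≠ u ∧
      ∀ w, C.Adj v w → w = u ∨ w = otherNbr C u v := by
  obtain ⟨x, y, hxy, hs⟩ := Set.ncard_eq_two.mp hdeg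
  have hu : u ∈ C.neighborSet v := h
  have hmem : ∀ w, C.Adj v w → w = x ∨ w = y := by
    intro w hw
    have : w ∈ C.neighborSet v := hw
    rw [hs] at this
    simpa using this
  rw [hs] at hu
  have hx : x ∈ C.neighborSet v := by rw [hs]; simp
  have hy : y ∈ C.neighborSet v := by rw [hs]; simp
  have hex : ∃ w, C.Adj v w ∧ w ≠ u := by
    rcases hu with rfl | rfl
    · exact ⟨y, hy, hxy.symm⟩
    · exact ⟨x, hx, hxy⟩
  rw [otherNbr]
  rw [dif_pos hex]
  obtain ⟨hadj, hne⟩ := hex.choose_spec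
  refine ⟨hadj, hne, fun w hw => ?_⟩
  rcases hmem w hw with rfl | rfl <;> rcases hmem _ hadj with h1 | h1 <;>
    rcases hu with rfl | rfl <;> simp_all
end Other

section Walk
variable (C : SimpleGraph V) (a b : V)

/-- Pairs of consecutive vertices along the walk around the cycle. -/
noncomputable def wkP : ℕ → V × V
  | 0 => (a, b)
  | k + 1 => ((wkP k).2, otherNbr C (wkP k).1 (wkP k).2)

/-- The walk around the cycle starting with `a, b`. -/
noncomputable def wk (k : ℕ) : V := (wkP C a b k).1

variable {C a b}
variable (hdeg : ∀ v : V, (C.neighborSet v).ncard = 2) (hab : C.Adj a b)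

lemma wk_zero : wk C a b 0 = a := rfl
lemma wk_one : wk C a b 1 = b := rfl

lemma wkP_eq (k : ℕ) : wkP C a b k = (wk C a b k, wk C a b (k + 1)) := rfl

lemma wk_step (k : ℕ) : wk C a b (k + 2) = otherNbr C (wk C a b k) (wk C a b (k + 1)) := rfl

include hdeg hab

lemma wk_adj : ∀ k, C.Adj (wk C a b k) (wk C a b (k + 1))
  | 0 => hab
  | (k + 1) => by
    have h := (wk_adj k).symm
    have := otherNbr_spec (hdeg (wk C a b (k+1))) h
    rw [← wk_step] at this
    exact this.1

lemma wk_ne (k : ℕ) : wk C a b (k + 2) ≠ wk C a b k := by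
  have h := (wk_adj hdeg hab k).symm
  have := otherNbr_spec (hdeg (wk C a b (k+1))) h
  rw [← wk_step] at this
  exact this.2.1

lemma wk_unique (k : ℕ) {w : V} (hw : C.Adj (wk C a b (k + 1)) w) :
    w = wk C a b k ∨ w = wk C a b (k + 2) := by
  have h := (wk_adj hdeg hab k).symm
  have := otherNbr_spec (hdeg (wk C a b (k+1))) h
  rw [← wk_step] at this
  exact this.2.2 w hw

lemma wk_back (k : ℕ) :
    wk C a b k = otherNbr C (wk C a b (k + 2)) (wk C a b (k + 1)) := by
  have h := wk_adj hdeg hab (k + 1)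
  have hs := otherNbr_spec (hdeg (wk C a b (k+1))) h
  rcases hs.2.2 (wk C a b k) (wk_adj hdeg hab k).symm with h1 | h1
  · exact absurd h1.symm (wk_ne hdeg hab k)
  · exact h1

lemma wkP_back {i j : ℕ} (hij : wkP C a b (i + 1) = wkP C a b (j + 1)) :
    wkP C a b i = wkP C a b j := by
  rw [wkP_eq, wkP_eq] at hij ⊢
  have h1 : wk C a b (i+1) = wk C a b (j+1) := congrArg Prod.fst hij
  have h2 : wk C a b (i+2) = wk C a b (j+2) := congrArg Prod.snd hij
  have h0 : wk C a b i = wk C a b j := by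
    rw [wk_back hdeg hab i, wk_back hdeg hab j, h1, h2]
  rw [h0, h1]

lemma wkP_shift : ∀ i j, i ≤ j → wkP C a b i = wkP C a b j →
    wkP C a b 0 = wkP C a b (j - i) := by
  intro i
  induction i with
  | zero => intro j _ h; simpa using h
  | succ i ih =>
    intro j hij h
    obtain ⟨j', rfl⟩ : ∃ j', j = j' + 1 := ⟨j - 1, by omega⟩
    have := wkP_back hdeg hab h
    have := ih j' (by omega) this
    simpa using this

lemma exists_wk_period [Finite V] : ∃ T, 0 < T ∧ wkP C a b T = wkP C a b 0 := by
  obtain ⟨i, j, hne, hval⟩ := Finite.exists_ne_map_eq_of_infinite (wkP C a b)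
  rcases lt_or_gt_of_ne hne with hlt | hlt
  · exact ⟨j - i, by omega, (wkP_shift hdeg hab i j hlt.le hval).symm⟩
  · exact ⟨i - j, by omega, (wkP_shift hdeg hab j i hlt.le hval.symm).symm⟩

end Walk

lemma cycle_structure [Fintype V] {C : SimpleGraph V} {m : ℕ}
    (hdeg : ∀ v : V, (C.neighborSet v).ncard = 2) (hconn : C.Connected)
    {a b : V} (hab : C.Adj a b) (hcard : Fintype.card V = m) (hm : 3 ≤ m) :
    ∃ f : ZMod m → V, Function.Bijective f ∧ f 0 = a ∧ f 1 = b ∧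
      ∀ (z : ZMod m) (w : V), C.Adj (f z) w ↔ w = f (z - 1) ∨ w = f (z + 1) := by
  classical
  set p : ℕ → V := wk C a b with hp
  have hex : ∃ T, 0 < T ∧ wkP C a b T = wkP C a b 0 := exists_wk_period hdeg hab
  set T := Nat.find hex with hTdef
  obtain ⟨hTpos, hTper⟩ : 0 < T ∧ wkP C a b T = wkP C a b 0 := Nat.find_spec hex
  have hmin : ∀ t, t < T → ¬(0 < t ∧ wkP C a b t = wkP C a b 0) :=
    fun t ht => Nat.find_min hex ht
  -- periodicity
  have hper : ∀ k, wkP C a b (k + T) = wkP C a b k := by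
    intro k
    induction k with
    | zero => simpa using hTper
    | succ k ih =>
      have h1 : k + 1 + T = (k + T) + 1 := by omega
      rw [h1, wkP, wkP, ih]
  have pper : ∀ k, p (k + T) = p k := fun k => congrArg Prod.fst (hper k)
  have pmul : ∀ c k, p (k + c * T) = p k := by
    intro c
    induction c with
    | zero => simp
    | succ c ih =>
      intro k
      have : k + (c + 1) * T = (k + c * T) + T := by ring
      rw [this, pper, ih]
  have pmod : ∀ k, p k = p (k % T) := by
    intro k
    conv_lhs => rw [show k = k % T + (k / T) * T by rw [Nat.mod_add_div']]
    rw [pmul]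
  have pcongr : ∀ {k l : ℕ}, k % T = l % T → p k = p l := by
    intro k l hkl
    rw [pmod k, pmod l, hkl]
  -- T is at least 3
  have hT3 : 3 ≤ T := by
    by_contra hlt
    push_neg at hlt
    interval_cases T
    · exact absurd hTper (by
        intro hper1
        have : p 1 = p 0 := congrArg Prod.fst hper1
        exact hab.ne' this)
    · exact absurd hTper (by
        intro hper2
        have : p 2 = p 0 := congrArg Prod.fst hper2
        exact wk_ne hdeg hab 0 this)
  -- neighbours of a walk vertex
  have nbr_wk : ∀ k w, C.Adj (p k) w → w = p (k + T - 1) ∨ w = p (k + 1) := by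
    intro k w hw
    have h1 : (k + T - 1) + 1 = k + T := by omega
    have h2 : p ((k + T - 1) + 1) = p k := by rw [h1]; exact pper k
    rw [← h2] at hw
    rcases wk_unique hdeg hab (k + T - 1) hw with h | h
    · exact Or.inl h
    · refine Or.inr ?_
      rw [h]
      exact pcongr (by rw [show k + T - 1 + 2 = (k + 1) + T from by omega, Nat.add_mod_right])
  -- injectivity on a period
  have aux : ∀ i j, i < j → j < T → p i ≠ p j := by
    intro i j hij hj hpe
    have hadjj : C.Adj (p i) (p (j + 1)) := by
      rw [hpe]; exact wk_adj hdeg hab j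
    rcases nbr_wk i _ hadjj with hB | hA
    · -- reflection case
      set t := T - 1 with htdef
      have ht1 : T = t + 1 := by omega
      have R : ∀ k, p (j + k) = p (i + k * t) ∧ p (j + k + 1) = p (i + (k + 1) * t) := by
        intro k
        induction k with
        | zero =>
          constructor
          · simpa using hpe.symm
          · have he : i + (0 + 1) * t = i + T - 1 := by omega
            rw [he]
            exact hB
        | succ k ih =>
          obtain ⟨h1, h2⟩ := ih
          refine ⟨h2, ?_⟩
          show p (j + k + 2) = p (i + (k + 2) * t)
          have hs2 : p (i + (k + 2) * t + 2) = p (j + k) := by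
            rw [show i + (k + 2) * t + 2 = (i + k * t) + 2 * T from by rw [ht1]; ring,
              pmul, h1]
          have hs1 : p (i + (k + 2) * t + 1) = p (j + k + 1) := by
            rw [show i + (k + 2) * t + 1 = (i + (k + 1) * t) + 1 * T from by rw [ht1]; ring,
              pmul, h2]
          have hback := wk_back hdeg hab (i + (k + 2) * t)
          rw [← hp, hs2, hs1] at hback
          exact (wk_step (j + k)).trans hback.symm
      obtain ⟨k, e, he, hk⟩ : ∃ k e, (e = 1 ∨ e = 2) ∧ 2 * k + e = i + 2 * T - j := by
        rcases Nat.even_or_odd (i + 2 * T - j) with ⟨s, hs⟩ | ⟨s, hs⟩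
        · exact ⟨s - 1, 2, Or.inr rfl, by omega⟩
        · exact ⟨s, 1, Or.inl rfl, by omega⟩
      have hcong : p (i + k * t) = p (j + k + e) := by
        apply pcongr
        have hmm : (i + k * t + k) % T = (j + k + e + k) % T := by
          rw [show i + k * t + k = i + k * T from by rw [ht1]; ring,
            show j + k + e + k = i + 2 * T from by omega,
            Nat.add_mul_mod_self_right, Nat.add_mul_mod_self_right]
        exact Nat.ModEq.add_right_cancel' k hmm
      have hkey : p (j + k) = p (j + k + e) := ((R k).1).trans hcong
      rcases he with rfl | rfl
      · exact (wk_adj hdeg hab (j + k)).ne hkey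
      · exact wk_ne hdeg hab (j + k) hkey.symm
    · -- shift case
      have hwkp : wkP C a b j = wkP C a b i := by
        rw [wkP_eq, wkP_eq, ← hp, hpe, hA]
      have := wkP_shift hdeg hab i j hij.le hwkp.symm
      exact hmin (j - i) (by omega) ⟨by omega, this.symm⟩
  have hinj : ∀ i j, i < T → j < T → p i = p j → i = j := by
    intro i j hi hj hpe
    rcases lt_trichotomy i j with hlt | hlt | hlt
    · exact absurd hpe (aux i j hlt hj)
    · exact hlt
    · exact absurd hpe.symm (aux j i hlt hi)
  have hSall : ∀ v : V, ∃ k, p k = v := by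
    have key : ∀ (u v : V) (q : C.Walk u v), (∃ k, p k = u) → ∃ k, p k = v := by
      intro u v q
      induction q with
      | nil => exact id
      | cons hadj _ ih =>
        rintro ⟨k, rfl⟩
        apply ih
        rcases nbr_wk k _ hadj with hh | hh
        · exact ⟨k + T - 1, hh.symm⟩
        · exact ⟨k + 1, hh.symm⟩
    intro v
    obtain ⟨q⟩ := hconn.preconnected a v
    exact key a v q ⟨0, rfl⟩
  haveI : NeZero T := ⟨by omega⟩
  have hbij : Function.Bijective (fun z : ZMod T => p z.val) := by
    constructor
    · intro z z' hzz
      exact ZMod.val_injective T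
        (hinj z.val z'.val (ZMod.val_lt z) (ZMod.val_lt z') hzz)
    · intro v
      obtain ⟨k, hk⟩ := hSall v
      refine ⟨(k : ZMod T), ?_⟩
      show p ((k : ZMod T).val) = v
      rw [ZMod.val_natCast, ← pmod k]
      exact hk
  have hTm : m = T := by
    rw [← hcard, ← ZMod.card T]
    exact (Fintype.card_of_bijective hbij).symm
  subst hTm
  have bridge : ∀ kk : ℕ, p ((kk : ZMod T)).val = p kk := by
    intro kk
    rw [ZMod.val_natCast]
    exact (pmod kk).symm
  have hvz : ∀ z : ZMod T, ((z.val : ℕ) : ZMod T) = z := fun z =>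
    ZMod.natCast_rightInverse z
  have hcast1 : ∀ z : ZMod T, ((z.val + 1 : ℕ) : ZMod T) = z + 1 := by
    intro z
    rw [Nat.cast_add, hvz, Nat.cast_one]
  have hcast2 : ∀ z : ZMod T, ((z.val + T - 1 : ℕ) : ZMod T) = z - 1 := by
    intro z
    rw [show z.val + T - 1 = z.val + (T - 1) from by omega, Nat.cast_add, hvz,
      Nat.cast_sub (by omega : 1 ≤ T), ZMod.natCast_self, Nat.cast_one]
    ring
  have hadj1 : ∀ y : ZMod T, C.Adj (p y.val) (p (y + 1).val) := by
    intro y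
    have hh := wk_adj hdeg hab y.val
    rw [← hp, ← bridge (y.val + 1), hcast1 y] at hh
    exact hh
  refine ⟨fun z => p z.val, hbij, ?_, ?_, ?_⟩
  · show p ((0 : ZMod T).val) = a
    rw [ZMod.val_zero]
    rfl
  · haveI : Fact (1 < T) := ⟨by omega⟩
    show p ((1 : ZMod T).val) = b
    rw [ZMod.val_one]
    rfl
  · intro z w
    constructor
    · intro hw
      rcases nbr_wk z.val w hw with hh | hh
      · left
        show w = p ((z - 1).val)
        rw [hh, ← bridge (z.val + T - 1), hcast2]
      · right
        show w = p ((z + 1).val)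
        rw [hh, ← bridge (z.val + 1), hcast1]
    · rintro (rfl | rfl)
      · have hh := hadj1 (z - 1)
        rw [sub_add_cancel] at hh
        exact hh.symm
      · exact hadj1 z

section Perm

lemma perm_fix_adj {C : SimpleGraph V} {σ : Equiv.Perm V} (hσ : σ • C = C) :
    ∀ u v : V, C.Adj u v → C.Adj (σ u) (σ v) := by
  intro u v huv
  have h1 : (C.map σ.toEmbedding).Adj (σ u) (σ v) := (SimpleGraph.map_adj _ _ _ _).mpr ⟨u, v, huv, rfl, rfl⟩
  have h2 : σ • C = C.map σ.toEmbedding := rfl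
  rwa [← h2, hσ] at h1

lemma reflect_along {C : SimpleGraph V} {m : ℕ} (hm : 3 ≤ m) (hmodd : Odd m)
    {f : ZMod m → V} (hfinj : Function.Injective f)
    (hnbr : ∀ (z : ZMod m) (w : V), C.Adj (f z) w ↔ w = f (z - 1) ∨ w = f (z + 1))
    {σ : Equiv.Perm V} (hσ : σ • C = C) {j₀ ε : ZMod m}
    (hε : ε = 1 ∨ ε = -1)
    (h0 : σ (f 0) = f j₀) (h1 : σ (f 1) = f (j₀ + ε)) :
    ∀ z : ZMod m, σ (f z) = f (j₀ + ε * z) := by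
  haveI : NeZero m := ⟨by omega⟩
  have h2ne : (2 : ZMod m) ≠ 0 := by
    intro hcon
    have : ((2 : ℕ) : ZMod m) = 0 := by exact_mod_cast hcon
    have hdvd := (ZMod.natCast_eq_zero_iff 2 m).mp this
    have := Nat.le_of_dvd (by norm_num) hdvd
    omega
  have hstepf : ∀ z : ZMod m, C.Adj (f z) (f (z + 1)) := fun z =>
    (hnbr z _).mpr (Or.inr rfl)
  have H : ∀ k : ℕ, σ (f (k : ZMod m)) = f (j₀ + ε * (k : ZMod m)) ∧
      σ (f ((k : ZMod m) + 1)) = f (j₀ + ε * ((k : ZMod m) + 1)) := by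
    intro k
    induction k with
    | zero =>
      constructor
      · simpa using h0
      · simpa using h1
    | succ k ih =>
      obtain ⟨ih1, ih2⟩ := ih
      have hcast : ((k + 1 : ℕ) : ZMod m) = (k : ZMod m) + 1 := by push_cast; ring
      constructor
      · rw [hcast]; exact ih2
      · rw [hcast]
        set y := (k : ZMod m) with hy
        -- σ (f (y + 2)) is adjacent to σ (f (y + 1)) = f (j₀ + ε (y+1))
        have hadj : C.Adj (f (j₀ + ε * (y + 1))) (σ (f (y + 1 + 1))) := by
          have := perm_fix_adj hσ _ _ (hstepf (y + 1))
          rwa [ih2] at this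
        have hne2 : σ (f (y + 1 + 1)) ≠ f (j₀ + ε * y) := by
          rw [← ih1]
          intro hcon
          have := hfinj (σ.injective hcon)
          have h20 : (2 : ZMod m) = 0 := by
            have h21 : y + 1 + 1 - y = y - y := by rw [this]
            have h22 : y + 1 + 1 - y = 2 := by ring
            have h23 : y - y = 0 := by ring
            rw [h22, h23] at h21
            exact h21
          exact h2ne h20
        rcases (hnbr _ _).mp hadj with hh | hh
        · rcases hε with rfl | rfl
          · exfalso
            apply hne2
            rw [hh]
            congr 1
            ring
          · rw [hh]
            congr 1
            ring
        · rcases hε with rfl | rfl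
          · rw [hh]
            congr 1
            ring
          · exfalso
            apply hne2
            rw [hh]
            congr 1
            ring
  intro z
  have hvz : ((z.val : ℕ) : ZMod m) = z := ZMod.natCast_rightInverse z
  have := (H z.val).1
  rwa [hvz] at this

end Perm

/-- two distinct involutory automorphisms fixing every cycle setwise, with
fixed points `a` and `b`, generate a group acting on the cycle through the edge `{a,b}`
as the full dihedral group of order `2(2n+1)`. -/
theorem two_involutions_generate_dihedral [Fintype V] (n : ℕ)
    (hV : Fintype.card V = 2 * n + 1)
    (𝓗 : Set (SimpleGraph V)) (h : IsHCS 𝓗) (α β : Equiv.Perm V)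
    (hαm : α ∈ autHCS 𝓗) (hβm : β ∈ autHCS 𝓗)
    (hα : orderOf α = 2) (hβ : orderOf β = 2) (hne : α ≠ β)
    (hαfix : ∀ H ∈ 𝓗, α • H = H) (hβfix : ∀ H ∈ 𝓗, β • H = H)
    (a b : V) (ha : α a = a) (hb : β b = b)
    (C : SimpleGraph V) (hC : C ∈ 𝓗) (hab : C.Adj a b) :
    (∀ σ ∈ Subgroup.closure {α, β}, σ • C = C) ∧
      Nonempty (↥(Subgroup.closure {α, β} : Subgroup (Equiv.Perm V)) ≃*
        DihedralGroup (2 * n + 1)) := by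
  have part1 : ∀ σ ∈ Subgroup.closure {α, β}, σ • C = C := by
    intro σ hσ
    induction hσ using Subgroup.closure_induction with
    | mem x hx =>
      rcases hx with rfl | rfl
      · exact hαfix C hC
      · exact hβfix C hC
    | one => exact one_smul _ C
    | mul x y hx hy hx' hy' => rw [mul_smul, hy', hx']
    | inv x hx hx' =>
      nth_rewrite 1 [← hx']
      exact inv_smul_smul x C
  refine ⟨part1, ?_⟩
  rcases Nat.eq_zero_or_pos n with rfl | hn
  · exact absurd hab (by
      have h1 : Fintype.card V ≤ 1 := by rw [hV]
      have hba : a = b := Fintype.card_le_one_iff.mp h1 a b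
      rw [hba]
      exact C.irrefl)
  set m := 2 * n + 1 with hmdef
  have hm3 : 3 ≤ m := by omega
  have hmodd : Odd m := ⟨n, by omega⟩
  haveI : NeZero m := ⟨by omega⟩
  obtain ⟨hCc, hCdeg⟩ := h.1 C hC
  obtain ⟨f, hfbij, hf0, hf1, hnbr⟩ := cycle_structure hCdeg hCc hab hV hm3
  have hCα : α • C = C := hαfix C hC
  have hCβ : β • C = C := hβfix C hC
  have hα2 : α * α = 1 := by rw [← sq, ← hα]; exact pow_orderOf_eq_one α
  have hβ2 : β * β = 1 := by rw [← sq, ← hβ]; exact pow_orderOf_eq_one β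
  have hαne1 : α ≠ 1 := by
    intro hcon
    rw [hcon, orderOf_one] at hα
    omega
  have hβne1 : β ≠ 1 := by
    intro hcon
    rw [hcon, orderOf_one] at hβ
    omega
  have hstepf : ∀ z : ZMod m, C.Adj (f z) (f (z + 1)) := fun z =>
    (hnbr z _).mpr (Or.inr rfl)
  -- fixing two consecutive vertices forces the identity
  have fix_all : ∀ σ : Equiv.Perm V, σ • C = C → σ (f 0) = f 0 → σ (f 1) = f 1 →
      σ = 1 := by
    intro σ hσ hσ0 hσ1
    have hrefl := reflect_along hm3 hmodd hfbij.1 hnbr hσ (Or.inl rfl) hσ0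
      (by simpa using hσ1)
    ext v
    obtain ⟨z, rfl⟩ := hfbij.2 v
    simpa using hrefl z
  -- α is the reflection fixing f 0
  have hαrefl : ∀ z, α (f z) = f (-z) := by
    have hα0 : α (f 0) = f 0 := by rw [hf0, ha]
    have hadj : C.Adj (f 0) (α (f 1)) := by
      have := perm_fix_adj hCα _ _ (by simpa using hstepf 0)
      rwa [hα0] at this
    rcases (hnbr 0 _).mp hadj with hh | hh
    · have hrefl := reflect_along (j₀ := 0) (ε := -1) hm3 hmodd hfbij.1 hnbr hCα
        (Or.inr rfl) hα0 (by rw [hh]; exact congrArg f (by ring))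
      intro z
      have := hrefl z
      rwa [zero_add, neg_one_mul] at this
    · exact absurd (fix_all α hCα hα0 (by rw [hh]; exact congrArg f (by ring))) hαne1
  -- β is the reflection fixing f 1
  have hβrefl : ∀ z, β (f z) = f (2 - z) := by
    have hβ1 : β (f 1) = f 1 := by rw [hf1, hb]
    have hadj : C.Adj (f 1) (β (f 0)) := by
      have := perm_fix_adj hCβ _ _ (by simpa using hstepf 0)
      rw [hβ1] at this
      exact this.symm
    rcases (hnbr 1 _).mp hadj with hh | hh
    · exact absurd (fix_all β hCβ (by rw [hh]; exact congrArg f (by ring)) hβ1) hβne1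
    · have hrefl := reflect_along (j₀ := 2) (ε := -1) hm3 hmodd hfbij.1 hnbr hCβ
        (Or.inr rfl) (by rw [hh]; exact congrArg f (by ring))
        (by rw [hβ1]; exact congrArg f (by ring))
      intro z
      have := hrefl z
      rwa [neg_one_mul, ← sub_eq_add_neg] at this
  -- the rotation
  set ρ := α * β with hρdef
  have hρf : ∀ z, ρ (f z) = f (z - 2) := by
    intro z
    show α (β (f z)) = f (z - 2)
    rw [hβrefl z, hαrefl (2 - z)]
    congr 1
    ring
  have hρpow : ∀ (k : ℕ) (z : ZMod m), (ρ ^ k) (f z) = f (z - 2 * k) := by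
    intro k
    induction k with
    | zero => intro z; simp
    | succ k ih =>
      intro z
      rw [pow_succ']
      show ρ ((ρ ^ k) (f z)) = _
      rw [ih z, hρf (z - 2 * k)]
      congr 1
      push_cast
      ring
  have hρpow_one : ∀ k : ℕ, ρ ^ k = 1 ↔ m ∣ 2 * k := by
    intro k
    constructor
    · intro hk
      have h1 : (ρ ^ k) (f 0) = f 0 := by rw [hk]; rfl
      rw [hρpow k 0] at h1
      have h2 := hfbij.1 h1
      have h3 : ((2 * k : ℕ) : ZMod m) = 0 := by
        push_cast
        linear_combination -h2
      exact (ZMod.natCast_eq_zero_iff (2 * k) m).mp h3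
    · intro hdvd
      ext v
      obtain ⟨z, rfl⟩ := hfbij.2 v
      rw [hρpow k z]
      have h3 : ((2 * k : ℕ) : ZMod m) = 0 :=
        (ZMod.natCast_eq_zero_iff (2 * k) m).mpr hdvd
      push_cast at h3
      show f (z - 2 * (k : ZMod m)) = f z
      rw [h3, sub_zero]
  have hcop : Nat.Coprime m 2 := hmodd.coprime_two_right
  have horder : orderOf ρ = m := by
    rw [orderOf_eq_iff (by omega : 0 < m)]
    constructor
    · exact (hρpow_one m).mpr ⟨2, by ring⟩
    · intro k hk hkpos hcon
      have hdvd := (hρpow_one k).mp hcon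
      have := (Nat.Coprime.dvd_of_dvd_mul_left hcop hdvd)
      have := Nat.le_of_dvd hkpos this
      omega
  -- dihedral relations
  have hαinv : α⁻¹ = α := inv_eq_of_mul_eq_one_right hα2
  have hβinv : β⁻¹ = β := inv_eq_of_mul_eq_one_right hβ2
  have hρinv : ρ⁻¹ = β * α := by rw [hρdef, mul_inv_rev, hαinv, hβinv]
  have hρα : ρ * α = α * ρ⁻¹ := by
    rw [hρinv, hρdef, mul_assoc]
  have key : ∀ k : ℕ, ρ ^ k * α = α * ρ⁻¹ ^ k := by
    intro k
    induction k with
    | zero => simp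
    | succ k ih =>
      rw [pow_succ, mul_assoc, hρα, ← mul_assoc, ih, mul_assoc, ← pow_succ]
  have key' : ∀ k : ℕ, ρ ^ k * α = α * (ρ ^ k)⁻¹ := by
    intro k
    rw [key k, inv_pow]
  -- the explicit morphism from the dihedral group
  have hpow_add : ∀ u v : ZMod m, ρ ^ (u + v).val = ρ ^ u.val * ρ ^ v.val := by
    intro u v
    rw [← pow_add]
    apply pow_eq_pow_iff_modEq.mpr
    rw [horder]
    show (u + v).val % m = (u.val + v.val) % m
    rw [ZMod.val_add]
    exact Nat.mod_mod_of_dvd _ dvd_rfl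
  have hsub : ∀ u v : ZMod m, ρ ^ u.val = ρ ^ v.val * ρ ^ (u - v).val := by
    intro u v
    have := hpow_add v (u - v)
    rwa [show v + (u - v) = u from by ring] at this
  let F : DihedralGroup m → Equiv.Perm V := fun g =>
    match g with
    | DihedralGroup.r i => ρ ^ i.val
    | DihedralGroup.sr i => α * ρ ^ i.val
  have hmul : ∀ x y : DihedralGroup m, F (x * y) = F x * F y := by
    intro x y
    cases x with
    | r i =>
      cases y with
      | r j =>
        show ρ ^ (i + j).val = ρ ^ i.val * ρ ^ j.val
        exact hpow_add i j
      | sr j =>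
        show α * ρ ^ (j - i).val = ρ ^ i.val * (α * ρ ^ j.val)
        rw [← mul_assoc, key' i.val, mul_assoc]
        congr 1
        rw [eq_inv_mul_iff_mul_eq]
        exact (hsub j i).symm
    | sr i =>
      cases y with
      | r j =>
        show α * ρ ^ (i + j).val = α * ρ ^ i.val * ρ ^ j.val
        rw [mul_assoc, hpow_add i j]
      | sr j =>
        show ρ ^ (j - i).val = α * ρ ^ i.val * (α * ρ ^ j.val)
        rw [mul_assoc, ← mul_assoc (ρ ^ i.val), key' i.val, ← mul_assoc,
          ← mul_assoc, hα2, one_mul, eq_inv_mul_iff_mul_eq]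
        exact (hsub j i).symm
  let φ : DihedralGroup m →* Equiv.Perm V := MonoidHom.mk' F hmul
  have hφinj : Function.Injective φ := by
    apply (injective_iff_map_eq_one φ).mpr
    intro x hx
    cases x with
    | r i =>
      have h1 : ρ ^ i.val = 1 := hx
      have hdvd : m ∣ i.val := by
        have hh1 := orderOf_dvd_of_pow_eq_one h1
        rwa [horder] at hh1
      have hlt : i.val < m := ZMod.val_lt i
      have hz : i.val = 0 := by
        rcases Nat.eq_zero_or_pos i.val with h0 | h0
        · exact h0
        · exact absurd (Nat.le_of_dvd h0 hdvd) (by omega)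
      have : i = 0 := by
        have := ZMod.natCast_rightInverse i
        rw [hz] at this
        simpa using this.symm
      rw [this, ← DihedralGroup.one_def]
    | sr i =>
      exfalso
      have h1 : α * ρ ^ i.val = 1 := hx
      have hαeq : α = (ρ ^ i.val)⁻¹ := eq_inv_of_mul_eq_one_left h1
      have hcomm : ρ * α = α * ρ := by
        rw [hαeq]
        exact (((Commute.refl ρ).pow_right i.val).inv_right).eq
      have hrr : ρ⁻¹ = ρ := by
        have k1 := key' 1
        simp only [pow_one] at k1
        have h2 : α * ρ = α * ρ⁻¹ := hcomm.symm.trans k1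
        exact (mul_left_cancel h2).symm
      have hρ2 : ρ ^ 2 = 1 := by rw [sq]; nth_rewrite 1 [← hrr]; exact inv_mul_cancel ρ
      have hdvd : m ∣ 2 := by
        have hh1 := orderOf_dvd_of_pow_eq_one hρ2
        rwa [horder] at hh1
      have := Nat.le_of_dvd (by norm_num) hdvd
      omega
  have hαmem : α ∈ Subgroup.closure {α, β} := Subgroup.subset_closure (by simp)
  have hβmem : β ∈ Subgroup.closure {α, β} := Subgroup.subset_closure (by simp)
  have hρmem : ρ ∈ Subgroup.closure {α, β} := mul_mem hαmem hβmem
  have hrange : φ.range = Subgroup.closure {α, β} := by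
    apply le_antisymm
    · rintro x ⟨g, rfl⟩
      cases g with
      | r i => exact pow_mem hρmem _
      | sr i => exact mul_mem hαmem (pow_mem hρmem _)
    · rw [Subgroup.closure_le]
      intro x hx
      simp only [Set.mem_insert_iff, Set.mem_singleton_iff] at hx
      rcases hx with hx | hx
      · refine ⟨DihedralGroup.sr 0, ?_⟩
        rw [hx]
        show α * ρ ^ (0 : ZMod m).val = α
        rw [ZMod.val_zero, pow_zero, mul_one]
      · refine ⟨DihedralGroup.sr 1, ?_⟩
        rw [hx]
        show α * ρ ^ (1 : ZMod m).val = β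
        haveI : Fact (1 < m) := ⟨by omega⟩
        rw [ZMod.val_one, pow_one, hρdef, ← mul_assoc, hα2, one_mul]
  exact ⟨(MulEquiv.subgroupCongr hrange.symm).trans (MonoidHom.ofInjective hφinj).symm⟩
end
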